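/- For every a ∈ ℝ^{n+1} with a(ζ_j) ≠ 0 for all j, one has T_γ(a) b = T_n(a) a; equivalently, Σ_{k=0}^n b_k γ_{k−i}(a) = Σ_{k=0}^n c̃_{i−k}(a) a_k for every i = 0, 1, …, n (where c̃_{−k}(a) = c̃_k(a)). -/
import Mathlib


open Finset Complex Matrix

noncomputable section

/-- The point `ζ_j = exp(iπ j / N)` of the discrete unit circle `𝕋_{2N}`. -/
def zeta (N : ℕ) (j : ℤ) : ℂ := Complex.exp (Real.pi * Complex.I * j / N)

/-- The index set `j = -N+1, …, N`. -/
def Idx (N : ℕ) : Finset ℤ := Finset.Icc (-(N : ℤ) + 1) (N : ℤ)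

/-- `a(ζ) = Σ_{k=0}^n a_k ζ^{-k}`. -/
def evC {n : ℕ} (a : Fin (n + 1) → ℝ) (z : ℂ) : ℂ :=
  ∑ k : Fin (n + 1), (a k : ℂ) * z ^ (-(k.val : ℤ))

/-- The symmetric Toeplitz matrix `T_n` with `(i,j)` entry `c_{|i-j|}`. -/
def Toep {n : ℕ} (c : Fin (n + 1) → ℝ) : Matrix (Fin (n + 1)) (Fin (n + 1)) ℝ :=
  fun i j => c ⟨max ((i : ℕ) - (j : ℕ)) ((j : ℕ) - (i : ℕ)),
    by have := i.isLt; have := j.isLt; omega⟩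

/-- `P(ζ) = b(ζ) b(ζ^{-1})`. -/
def PPd {n : ℕ} (b : Fin (n + 1) → ℝ) (z : ℂ) : ℂ := evC b z * evC b z⁻¹

/-- `𝕁_P(a) = aᵀ T_n a − (1/2N) Σ_j P(ζ_j) log( a(ζ_j) a(ζ_j^{-1}) )`. -/
def Jd (N : ℕ) {n : ℕ} (c b a : Fin (n + 1) → ℝ) : ℝ :=
  dotProduct a ((Toep c).mulVec a) -
    (∑ j ∈ Idx N, (PPd b (zeta N j)).re *
        Real.log ((evC a (zeta N j) * evC a (zeta N j)⁻¹).re)) / (2 * N)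

/-- `γ_t(a) = (1/2N) Σ_j ζ_j^t b(ζ_j)/a(ζ_j)` (a real number). -/
def gam (N : ℕ) {n : ℕ} (b a : Fin (n + 1) → ℝ) (t : ℤ) : ℝ :=
  ((∑ j ∈ Idx N, zeta N j ^ t * evC b (zeta N j) / evC a (zeta N j)) / (2 * N)).re

/-- The matrix `T_γ(a)` with `(i,j)` entry `γ_{j−i}(a)`. -/
def Tgam (N : ℕ) {n : ℕ} (b a : Fin (n + 1) → ℝ) :
    Matrix (Fin (n + 1)) (Fin (n + 1)) ℝ :=
  fun i j => gam N b a ((j.val : ℤ) - (i.val : ℤ))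

/-- `c̃_k(a) = (1/2N) Σ_j ζ_j^k P(ζ_j)/( a(ζ_j) a(ζ_j^{-1}) )` (a real number). -/
def ctil (N : ℕ) {n : ℕ} (b a : Fin (n + 1) → ℝ) (k : ℤ) : ℝ :=
  ((∑ j ∈ Idx N, zeta N j ^ k * PPd b (zeta N j) /
      (evC a (zeta N j) * evC a (zeta N j)⁻¹)) / (2 * N)).re

/-- The symmetric Toeplitz matrix `T_n(a)` with `(i,j)` entry `c̃_{|i−j|}(a)`. -/
def TnA (N : ℕ) {n : ℕ} (b a : Fin (n + 1) → ℝ) :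
    Matrix (Fin (n + 1)) (Fin (n + 1)) ℝ :=
  fun i j => ctil N b a ((max ((i : ℕ) - (j : ℕ)) ((j : ℕ) - (i : ℕ)) : ℕ) : ℤ)


lemma zeta_ne_zero (N : ℕ) (j : ℤ) : zeta N j ≠ 0 := Complex.exp_ne_zero _

lemma zeta_neg (N : ℕ) (j : ℤ) : zeta N (-j) = (zeta N j)⁻¹ := by
  rw [zeta, zeta, ← Complex.exp_neg]
  congr 1
  push_cast
  ring

lemma zeta_N (N : ℕ) (hN : N ≠ 0) : zeta N (N : ℤ) = -1 := by
  have h : (N : ℂ) ≠ 0 := Nat.cast_ne_zero.mpr hN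
  rw [zeta, show (Real.pi : ℂ) * Complex.I * ((N : ℤ) : ℂ) / (N : ℂ)
      = Real.pi * Complex.I by push_cast; field_simp]
  exact Complex.exp_pi_mul_I

lemma sum_zeta_inv (N : ℕ) (hN : N ≠ 0) (F : ℂ → ℂ) :
    ∑ j ∈ Idx N, F ((zeta N j)⁻¹) = ∑ j ∈ Idx N, F (zeta N j) := by
  have hN1 : 1 ≤ (N : ℤ) := by exact_mod_cast Nat.one_le_iff_ne_zero.mpr hN
  have hmem : ∀ j : ℤ, j ∈ Idx N → (if j = (N : ℤ) then (N : ℤ) else -j) ∈ Idx N := by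
    intro j hj
    simp only [Idx, Finset.mem_Icc] at hj ⊢
    split_ifs with h <;> omega
  have hinv : ∀ j : ℤ, j ∈ Idx N →
      (if (if j = (N : ℤ) then (N : ℤ) else -j) = (N : ℤ) then (N : ℤ)
        else -(if j = (N : ℤ) then (N : ℤ) else -j)) = j := by
    intro j hj
    simp only [Idx, Finset.mem_Icc] at hj
    split_ifs with h1 h2 <;> omega
  refine Finset.sum_bij' (fun j _ => if j = (N : ℤ) then (N : ℤ) else -j)
    (fun j _ => if j = (N : ℤ) then (N : ℤ) else -j)
    (fun j hj => hmem j hj) (fun j hj => hmem j hj)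
    (fun j hj => hinv j hj) (fun j hj => hinv j hj) ?_
  intro j hj
  beta_reduce
  rcases eq_or_ne j (N : ℤ) with rfl | h
  · rw [if_pos rfl, zeta_N N hN, show ((-1 : ℂ))⁻¹ = -1 by norm_num]
  · rw [if_neg h, zeta_neg]

lemma evC_inv {n : ℕ} (c : Fin (n + 1) → ℝ) (z : ℂ) :
    evC c z⁻¹ = ∑ k : Fin (n + 1), (c k : ℂ) * z ^ (k.val : ℤ) := by
  simp [evC, _root_.zpow_neg, _root_.inv_zpow, inv_inv]

lemma PPd_inv {n : ℕ} (b : Fin (n + 1) → ℝ) (z : ℂ) : PPd b z⁻¹ = PPd b z := by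
  rw [PPd, PPd, inv_inv, mul_comm]

lemma ctil_neg (N : ℕ) {n : ℕ} (hN : N ≠ 0) (b a : Fin (n + 1) → ℝ) (k : ℤ) :
    ctil N b a (-k) = ctil N b a k := by
  unfold ctil
  congr 2
  rw [← sum_zeta_inv N hN (fun z => z ^ k * PPd b z / (evC a z * evC a z⁻¹))]
  refine Finset.sum_congr rfl fun j hj => ?_
  beta_reduce
  rw [PPd_inv, inv_inv, _root_.inv_zpow, ← _root_.zpow_neg,
    mul_comm (evC a (zeta N j)⁻¹) (evC a (zeta N j))]

lemma key (N : ℕ) {n : ℕ} (hN : N ≠ 0) (b a : Fin (n + 1) → ℝ)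
    (ha : ∀ j ∈ Idx N, evC a (zeta N j) ≠ 0) (i : ℤ) :
    ∑ k : Fin (n + 1), b k * gam N b a ((k.val : ℤ) - i) =
      ∑ k : Fin (n + 1), ctil N b a (i - (k.val : ℤ)) * a k := by
  have ha' : ∀ j ∈ Idx N, evC a ((zeta N j)⁻¹) ≠ 0 := by
    intro j hj
    rcases eq_or_ne j (N : ℤ) with rfl | h
    · rw [zeta_N N hN, show ((-1 : ℂ))⁻¹ = -1 by norm_num, ← zeta_N N hN]
      exact ha _ hj
    · rw [← zeta_neg]
      apply ha
      simp only [Idx, Finset.mem_Icc] at hj ⊢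
      omega
  have hA : ∑ k : Fin (n + 1), (b k : ℂ) *
        ∑ j ∈ Idx N, zeta N j ^ ((k.val : ℤ) - i) * evC b (zeta N j) / evC a (zeta N j)
      = ∑ j ∈ Idx N, zeta N j ^ (-i) * PPd b (zeta N j) / evC a (zeta N j) := by
    simp only [Finset.mul_sum]
    rw [Finset.sum_comm]
    refine Finset.sum_congr rfl fun j hj => ?_
    have hz := zeta_ne_zero N j
    calc ∑ k : Fin (n + 1), (b k : ℂ) *
          (zeta N j ^ ((k.val : ℤ) - i) * evC b (zeta N j) / evC a (zeta N j))
        = (∑ k : Fin (n + 1), (b k : ℂ) * zeta N j ^ (k.val : ℤ)) *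
            (zeta N j ^ (-i) * evC b (zeta N j) / evC a (zeta N j)) := by
          rw [Finset.sum_mul]
          refine Finset.sum_congr rfl fun k _ => ?_
          rw [zpow_sub₀ hz, _root_.zpow_neg]
          ring
      _ = _ := by rw [← evC_inv, PPd]; ring
  have hB : ∑ k : Fin (n + 1), (a k : ℂ) *
        ∑ j ∈ Idx N, zeta N j ^ (i - (k.val : ℤ)) * PPd b (zeta N j) /
          (evC a (zeta N j) * evC a (zeta N j)⁻¹)
      = ∑ j ∈ Idx N, zeta N j ^ i * PPd b (zeta N j) / evC a (zeta N j)⁻¹ := by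
    simp only [Finset.mul_sum]
    rw [Finset.sum_comm]
    refine Finset.sum_congr rfl fun j hj => ?_
    have hz := zeta_ne_zero N j
    calc ∑ k : Fin (n + 1), (a k : ℂ) *
          (zeta N j ^ (i - (k.val : ℤ)) * PPd b (zeta N j) /
            (evC a (zeta N j) * evC a (zeta N j)⁻¹))
        = (∑ k : Fin (n + 1), (a k : ℂ) * zeta N j ^ (-(k.val : ℤ))) *
            (zeta N j ^ i * PPd b (zeta N j) /
              (evC a (zeta N j) * evC a (zeta N j)⁻¹)) := by
          rw [Finset.sum_mul]
          refine Finset.sum_congr rfl fun k _ => ?_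
          rw [zpow_sub₀ hz, _root_.zpow_neg]
          ring
      _ = _ := by
          rw [show (∑ k : Fin (n + 1), (a k : ℂ) * zeta N j ^ (-(k.val : ℤ)))
            = evC a (zeta N j) from rfl]
          rw [← mul_div_assoc, mul_div_mul_left _ _ (ha j hj)]
  have hLR : ∑ j ∈ Idx N, zeta N j ^ (-i) * PPd b (zeta N j) / evC a (zeta N j)
      = ∑ j ∈ Idx N, zeta N j ^ i * PPd b (zeta N j) / evC a (zeta N j)⁻¹ := by
    rw [← sum_zeta_inv N hN (fun z => z ^ i * PPd b z / evC a z⁻¹)]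
    refine Finset.sum_congr rfl fun j hj => ?_
    beta_reduce
    rw [PPd_inv, inv_inv, _root_.inv_zpow, ← _root_.zpow_neg]
  calc ∑ k : Fin (n + 1), b k * gam N b a ((k.val : ℤ) - i)
      = ((∑ j ∈ Idx N, zeta N j ^ (-i) * PPd b (zeta N j) / evC a (zeta N j))
          / (2 * N)).re := by
        unfold gam
        simp only [← Complex.re_ofReal_mul, ← Complex.re_sum]
        congr 1
        simp only [mul_div_assoc']
        rw [← Finset.sum_div, hA]
    _ = ((∑ j ∈ Idx N, zeta N j ^ i * PPd b (zeta N j) / evC a (zeta N j)⁻¹)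
          / (2 * N)).re := by rw [hLR]
    _ = ∑ k : Fin (n + 1), ctil N b a (i - (k.val : ℤ)) * a k := by
        unfold ctil
        simp only [mul_comm _ (a _)]
        simp only [← Complex.re_ofReal_mul, ← Complex.re_sum]
        congr 1
        simp only [mul_div_assoc']
        rw [← Finset.sum_div, hB]
/-- `T_γ(a) b = T_n(a) a`, i.e. for every `i = 0, …, n`,
`Σ_{k=0}^n b_k γ_{k−i}(a) = Σ_{k=0}^n c̃_{i−k}(a) a_k`. -/
theorem stmt7 (N n : ℕ) (hn : 1 ≤ n) (hNn : n < N)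
    (b : Fin (n + 1) → ℝ) (hb0 : b 0 = 1)
    (a : Fin (n + 1) → ℝ) (ha : ∀ j ∈ Idx N, evC a (zeta N j) ≠ 0) :
    (Tgam N b a).mulVec b = (TnA N b a).mulVec a ∧
    ∀ i : Fin (n + 1),
      ∑ k : Fin (n + 1), b k * gam N b a ((k.val : ℤ) - (i.val : ℤ)) =
        ∑ k : Fin (n + 1), ctil N b a ((i.val : ℤ) - (k.val : ℤ)) * a k := by
  have hN : N ≠ 0 := by omega
  have h2 : ∀ i : Fin (n + 1),
      ∑ k : Fin (n + 1), b k * gam N b a ((k.val : ℤ) - (i.val : ℤ)) =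
        ∑ k : Fin (n + 1), ctil N b a ((i.val : ℤ) - (k.val : ℤ)) * a k :=
    fun i => key N hN b a ha ((i.val : ℤ))
  refine ⟨?_, h2⟩
  funext i
  simp only [mulVec, dotProduct, Tgam, TnA]
  calc ∑ k : Fin (n + 1), gam N b a ((k.val : ℤ) - (i.val : ℤ)) * b k
      = ∑ k : Fin (n + 1), b k * gam N b a ((k.val : ℤ) - (i.val : ℤ)) := by
        simp [mul_comm]
    _ = ∑ k : Fin (n + 1), ctil N b a ((i.val : ℤ) - (k.val : ℤ)) * a k := h2 i
    _ = ∑ k : Fin (n + 1),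
          ctil N b a ((max ((i : ℕ) - (k : ℕ)) ((k : ℕ) - (i : ℕ)) : ℕ) : ℤ) * a k := by
        refine Finset.sum_congr rfl fun k _ => ?_
        congr 1
        rcases le_total (k : ℕ) (i : ℕ) with h | h
        · rw [Nat.sub_eq_zero_of_le h, max_eq_left (Nat.zero_le _)]
          congr 1
          omega
        · rw [Nat.sub_eq_zero_of_le h, max_eq_right (Nat.zero_le _)]
          rw [show (((k : ℕ) - (i : ℕ) : ℕ) : ℤ) = -((i.val : ℤ) - (k.val : ℤ)) by omega,
            ctil_neg N hN]


end
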